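/- arXiv:0704.3536 — 2 statements merged into one kernel-verified Lean document; each statement's English description precedes it below -/
import Mathlib

section
/- Let S ⊆ ℕ be a telescopic semigroup generated by a telescopic sequence α₁, ..., α_r. Then every element α ∈ S can be written uniquely as α = Σ_{i=1}^r a_i α_i with a₁ ≥ 0 and 0 ≤ a_i < gcd(α₁,...,α_{i-1})/gcd(α₁,...,α_i) for 2 ≤ i ≤ r. -/
/-- `dtel α i = gcd(α₁, …, α_i)` (generators indexed from 1). -/
def dtel (α : ℕ → ℕ) (i : ℕ) : ℕ := (Finset.Icc 1 i).gcd α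

/-- A telescopic sequence `α₁, …, α_r` of positive integers. -/
def IsTelescopic (r : ℕ) (α : ℕ → ℕ) : Prop :=
  (∀ i, 1 ≤ i → i ≤ r → 0 < α i) ∧
  dtel α r = 1 ∧
  ∀ i, 2 ≤ i → i ≤ r →
    α i / dtel α i ∈
      AddSubmonoid.closure {x : ℕ | ∃ j, 1 ≤ j ∧ j < i ∧ x = α j / dtel α (i - 1)}

lemma dtel_dvd (α : ℕ → ℕ) {i j : ℕ} (h1 : 1 ≤ j) (h2 : j ≤ i) : dtel α i ∣ α j :=
  Finset.gcd_dvd (Finset.mem_Icc.2 ⟨h1, h2⟩)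

lemma dtel_pos (α : ℕ → ℕ) (h1 : 0 < α 1) {i : ℕ} (hi : 1 ≤ i) : 0 < dtel α i :=
  Nat.pos_of_dvd_of_pos (dtel_dvd α le_rfl hi) h1

lemma dtel_dvd_dtel (α : ℕ → ℕ) {j i : ℕ} (h : j ≤ i) : dtel α i ∣ dtel α j :=
  Finset.dvd_gcd fun b hb =>
    dtel_dvd α (Finset.mem_Icc.1 hb).1 ((Finset.mem_Icc.1 hb).2.trans h)

lemma Icc_eq_insert (n : ℕ) (hn : 1 ≤ n) :
    Finset.Icc 1 n = insert n (Finset.Icc 1 (n - 1)) := by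
  ext x
  simp only [Finset.mem_Icc, Finset.mem_insert]
  omega

lemma dtel_succ (α : ℕ → ℕ) {k : ℕ} (hk : 1 ≤ k) :
    dtel α k = Nat.gcd (α k) (dtel α (k - 1)) := by
  rw [dtel, Icc_eq_insert k hk, Finset.gcd_insert]; rfl

/-- extraction: `d_{i-1} * (α_i / d_i)` is an ℕ-combination of `α₁,…,α_{i-1}`. -/
lemma ext_lemma (r : ℕ) (α : ℕ → ℕ) (h : IsTelescopic r α) {i : ℕ}
    (h2 : 2 ≤ i) (hir : i ≤ r) :
    ∃ c : ℕ → ℕ, dtel α (i - 1) * (α i / dtel α i)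
      = ∑ j ∈ Finset.Icc 1 (i - 1), c j * α j := by
  have hmem := h.2.2 i h2 hir
  refine AddSubmonoid.closure_induction
    (motive := fun x _ => ∃ c : ℕ → ℕ, dtel α (i - 1) * x
      = ∑ j ∈ Finset.Icc 1 (i - 1), c j * α j) ?_ ?_ ?_ hmem
  · rintro x ⟨j, hj1, hji, rfl⟩
    refine ⟨fun t => if t = j then 1 else 0, ?_⟩
    have hdvd : dtel α (i - 1) ∣ α j := dtel_dvd α hj1 (by omega)
    rw [Nat.mul_div_cancel' hdvd, Finset.sum_eq_single j]
    · simp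
    · intro b _ hb; simp [hb]
    · intro hj; exact absurd (Finset.mem_Icc.2 ⟨hj1, by omega⟩) hj
  · exact ⟨0, by simp⟩
  · rintro x y _ _ ⟨c, hc⟩ ⟨c', hc'⟩
    exact ⟨c + c', by simp [Nat.mul_add, hc, hc', add_mul, Finset.sum_add_distrib]⟩

lemma exists_repr (r : ℕ) (α : ℕ → ℕ) {x : ℕ}
    (hx : x ∈ AddSubmonoid.closure {y : ℕ | ∃ i, 1 ≤ i ∧ i ≤ r ∧ y = α i}) :
    ∃ b : ℕ → ℕ, x = ∑ i ∈ Finset.Icc 1 r, b i * α i := by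
  refine AddSubmonoid.closure_induction
    (motive := fun x _ => ∃ b : ℕ → ℕ, x = ∑ i ∈ Finset.Icc 1 r, b i * α i) ?_ ?_ ?_ hx
  · rintro x ⟨j, hj1, hjr, rfl⟩
    refine ⟨fun t => if t = j then 1 else 0, ?_⟩
    rw [Finset.sum_eq_single j]
    · simp
    · intro b _ hb; simp [hb]
    · intro hj; exact absurd (Finset.mem_Icc.2 ⟨hj1, hjr⟩) hj
  · exact ⟨0, by simp⟩
  · rintro x y _ _ ⟨c, hc⟩ ⟨c', hc'⟩
    exact ⟨c + c', by simp [hc, hc', add_mul, Finset.sum_add_distrib]⟩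

/-- Key identity: `(d_{m-1}/d_m) * α_m = d_{m-1} * (α_m / d_m)`. -/
lemma key_identity (α : ℕ → ℕ) {m : ℕ} (hpos : 0 < dtel α m)
    (hdvd : dtel α m ∣ dtel α (m - 1)) (hdvd2 : dtel α m ∣ α m) :
    dtel α (m - 1) / dtel α m * α m = dtel α (m - 1) * (α m / dtel α m) := by
  obtain ⟨e, he⟩ := hdvd
  obtain ⟨f, hf⟩ := hdvd2
  rw [he, hf, Nat.mul_div_cancel_left _ hpos, Nat.mul_div_cancel_left _ hpos]
  ring

/-- Normalization: any representation can be turned into a constrained one. -/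
lemma norm_lemma (r : ℕ) (hr : 1 ≤ r) (α : ℕ → ℕ) (h : IsTelescopic r α)
    (b : ℕ → ℕ) :
    ∃ a : ℕ → ℕ, (∀ i, (i = 0 ∨ r < i) → a i = 0) ∧
      (∀ i, 2 ≤ i → i ≤ r → a i < dtel α (i - 1) / dtel α i) ∧
      ∑ i ∈ Finset.Icc 1 r, a i * α i = ∑ i ∈ Finset.Icc 1 r, b i * α i := by
  have halpha1 : 0 < α 1 := h.1 1 le_rfl hr
  suffices H : ∀ j, j ≤ r - 1 → ∀ b : ℕ → ℕ,
      ∃ a : ℕ → ℕ, (∀ i, (i = 0 ∨ r < i) → a i = 0) ∧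
        (∀ i, 2 ≤ i → r + 1 - j ≤ i → i ≤ r → a i < dtel α (i - 1) / dtel α i) ∧
        ∑ i ∈ Finset.Icc 1 r, a i * α i = ∑ i ∈ Finset.Icc 1 r, b i * α i by
    obtain ⟨a, h1, h2, h3⟩ := H (r - 1) le_rfl b
    exact ⟨a, h1, fun i hi2 hir => h2 i hi2 (by omega) hir, h3⟩
  intro j
  induction j with
  | zero =>
    intro _ b
    refine ⟨fun i => if 1 ≤ i ∧ i ≤ r then b i else 0, ?_, ?_, ?_⟩
    · intro i hi; simp only [ite_eq_right_iff]; omega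
    · intro i _ hm _; omega
    · refine Finset.sum_congr rfl fun i hi => ?_
      rw [Finset.mem_Icc] at hi
      simp [hi.1, hi.2]
  | succ j ih =>
    intro hj b
    obtain ⟨a, ha0, hac, hasum⟩ := ih (by omega) b
    set m := r - j with hm_def
    have hm2 : 2 ≤ m := by omega
    have hmr : m ≤ r := by omega
    have hm1 : 1 ≤ m := by omega
    have hdm_pos : 0 < dtel α m := dtel_pos α halpha1 hm1
    have hd1_pos : 0 < dtel α (m - 1) := dtel_pos α halpha1 (by omega)
    have hdvd : dtel α m ∣ dtel α (m - 1) := dtel_dvd_dtel α (Nat.sub_le m 1)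
    set D := dtel α (m - 1) / dtel α m with hD_def
    have hD_pos : 0 < D := Nat.div_pos (Nat.le_of_dvd hd1_pos hdvd) hdm_pos
    obtain ⟨c, hc⟩ := ext_lemma r α h hm2 hmr
    set q := a m / D with hq_def
    set a' : ℕ → ℕ := fun i => if i = m then a m % D
        else if 1 ≤ i ∧ i ≤ m - 1 then a i + q * c i else a i with ha'_def
    refine ⟨a', ?_, ?_, ?_⟩
    · intro i hi
      have him : i ≠ m := by omega
      have hcond : ¬ (1 ≤ i ∧ i ≤ m - 1) := by omega
      simp only [ha'_def, him, hcond, if_false]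
      exact ha0 i hi
    · intro i hi2 hge hir
      by_cases him : i = m
      · subst him
        simp only [ha'_def, if_pos rfl]
        exact Nat.mod_lt _ hD_pos
      · have hcond : ¬ (1 ≤ i ∧ i ≤ m - 1) := by omega
        simp only [ha'_def, him, hcond, if_false]
        exact hac i hi2 (by omega) hir
    · rw [← hasum]
      have hIoc : ∀ f : ℕ → ℕ, ∑ i ∈ Finset.Icc 1 r, f i
          = ∑ i ∈ Finset.Icc 1 (m - 1), f i + f m + ∑ i ∈ Finset.Ioc m r, f i := by
        intro f
        have h1 : Finset.Icc 1 r = Finset.Ioc 0 r := Finset.Icc_add_one_left_eq_Ioc 0 r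
        have h2 : Finset.Icc 1 (m - 1) = Finset.Ioc 0 (m - 1) :=
          Finset.Icc_add_one_left_eq_Ioc 0 (m - 1)
        have h3 : Finset.Ioc (m - 1) m = {m} := by
          ext x; simp only [Finset.mem_Ioc, Finset.mem_singleton]; omega
        rw [h1, h2,
          ← Finset.sum_Ioc_consecutive f (Nat.zero_le (m - 1)) (by omega : m - 1 ≤ r),
          ← Finset.sum_Ioc_consecutive f (by omega : m - 1 ≤ m) hmr, h3,
          Finset.sum_singleton, add_assoc]
      rw [hIoc (fun i => a' i * α i), hIoc (fun i => a i * α i)]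
      have e1 : ∑ i ∈ Finset.Icc 1 (m - 1), a' i * α i
          = ∑ i ∈ Finset.Icc 1 (m - 1), a i * α i
            + q * ∑ i ∈ Finset.Icc 1 (m - 1), c i * α i := by
        rw [Finset.mul_sum, ← Finset.sum_add_distrib]
        refine Finset.sum_congr rfl fun i hi => ?_
        rw [Finset.mem_Icc] at hi
        have him : i ≠ m := by omega
        simp only [ha'_def, him, if_false, if_pos (And.intro hi.1 hi.2)]
        ring
      have e2 : a' m = a m % D := by simp [ha'_def]
      have e3 : ∑ i ∈ Finset.Ioc m r, a' i * α i
          = ∑ i ∈ Finset.Ioc m r, a i * α i := by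
        refine Finset.sum_congr rfl fun i hi => ?_
        rw [Finset.mem_Ioc] at hi
        have him : i ≠ m := by omega
        have hcond : ¬ (1 ≤ i ∧ i ≤ m - 1) := by omega
        simp only [ha'_def, him, hcond, if_false]
      have hkey : ∑ i ∈ Finset.Icc 1 (m - 1), c i * α i = D * α m := by
        rw [← hc, hD_def, key_identity α hdm_pos hdvd (dtel_dvd α hm1 le_rfl)]
      have hqd : q * D + a m % D = a m := by rw [mul_comm]; exact Nat.div_add_mod (a m) D
      rw [e1, e2, e3, hkey]
      have : q * (D * α m) + a m % D * α m = a m * α m := by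
        rw [← mul_assoc, ← add_mul, hqd]
      calc ∑ i ∈ Finset.Icc 1 (m - 1), a i * α i + q * (D * α m) + a m % D * α m
            + ∑ i ∈ Finset.Ioc m r, a i * α i
          = ∑ i ∈ Finset.Icc 1 (m - 1), a i * α i
            + (q * (D * α m) + a m % D * α m)
            + ∑ i ∈ Finset.Ioc m r, a i * α i := by ring
        _ = _ := by rw [this]

lemma uniq_lemma (r : ℕ) (hr : 1 ≤ r) (α : ℕ → ℕ) (h : IsTelescopic r α) :
    ∀ k, 1 ≤ k → k ≤ r → ∀ a a' : ℕ → ℕ,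
      (∀ i, 2 ≤ i → i ≤ k → a i < dtel α (i - 1) / dtel α i) →
      (∀ i, 2 ≤ i → i ≤ k → a' i < dtel α (i - 1) / dtel α i) →
      ∑ i ∈ Finset.Icc 1 k, a i * α i = ∑ i ∈ Finset.Icc 1 k, a' i * α i →
      ∀ i, 1 ≤ i → i ≤ k → a i = a' i := by
  have halpha1 : 0 < α 1 := h.1 1 le_rfl hr
  intro k
  induction k using Nat.strong_induction_on with
  | _ k ih =>
    intro hk1 hkr a a' hca hca' hsum i hi1 hik
    rcases Nat.lt_or_ge k 2 with hk2 | hk2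
    · -- k = 1
      have hk : k = 1 := by omega
      subst hk
      have hi : i = 1 := by omega
      subst hi
      simp only [Finset.Icc_self, Finset.sum_singleton] at hsum
      exact Nat.eq_of_mul_eq_mul_right halpha1 hsum
    · -- k ≥ 2
      obtain ⟨n, rfl⟩ : ∃ n, k = n + 1 := ⟨k - 1, by omega⟩
      have hn1 : 1 ≤ n := by omega
      have hd1_pos : 0 < dtel α n := dtel_pos α halpha1 hn1
      rw [Finset.sum_Icc_succ_top (by omega : 1 ≤ n + 1),
          Finset.sum_Icc_succ_top (by omega : 1 ≤ n + 1)] at hsum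
      have hS : dtel α n ∣ ∑ i ∈ Finset.Icc 1 n, a i * α i :=
        Finset.dvd_sum fun i hi => Dvd.dvd.mul_left
          (dtel_dvd α (Finset.mem_Icc.1 hi).1 (Finset.mem_Icc.1 hi).2) (a i)
      have hS' : dtel α n ∣ ∑ i ∈ Finset.Icc 1 n, a' i * α i :=
        Finset.dvd_sum fun i hi => Dvd.dvd.mul_left
          (dtel_dvd α (Finset.mem_Icc.1 hi).1 (Finset.mem_Icc.1 hi).2) (a' i)
      obtain ⟨s, hs⟩ := hS
      obtain ⟨s', hs'⟩ := hS'
      rw [hs, hs'] at hsum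
      have hmod : a (n + 1) * α (n + 1) ≡ a' (n + 1) * α (n + 1) [MOD dtel α n] := by
        show _ % _ = _ % _
        rw [← Nat.mul_add_mod (dtel α n) s (a (n + 1) * α (n + 1)), hsum,
          Nat.mul_add_mod]
      have hgcd : Nat.gcd (dtel α n) (α (n + 1)) = dtel α (n + 1) := by
        have := dtel_succ α (show 1 ≤ n + 1 by omega)
        simp only [Nat.add_sub_cancel] at this
        rw [Nat.gcd_comm]
        exact this.symm
      have hcan := Nat.ModEq.cancel_right_div_gcd hd1_pos hmod
      rw [hgcd] at hcan
      have hba : a (n + 1) < dtel α n / dtel α (n + 1) := by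
        have := hca (n + 1) (by omega) le_rfl
        simpa using this
      have hba' : a' (n + 1) < dtel α n / dtel α (n + 1) := by
        have := hca' (n + 1) (by omega) le_rfl
        simpa using this
      have htop : a (n + 1) = a' (n + 1) := by
        have := hcan
        unfold Nat.ModEq at this
        rwa [Nat.mod_eq_of_lt hba, Nat.mod_eq_of_lt hba'] at this
      rcases Nat.lt_or_ge i (n + 1) with hin | hin
      · -- use induction hypothesis on n
        have hsum' : ∑ i ∈ Finset.Icc 1 n, a i * α i
            = ∑ i ∈ Finset.Icc 1 n, a' i * α i := by
          rw [htop] at hsum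
          have : dtel α n * s = dtel α n * s' := by omega
          rw [hs, hs', this]
        exact ih n (by omega) hn1 (by omega) a a'
          (fun i h2 hn => hca i h2 (by omega))
          (fun i h2 hn => hca' i h2 (by omega))
          hsum' i hi1 (by omega)
      · have : i = n + 1 := by omega
        subst this
        exact htop

/-- every element of a telescopic semigroup has a unique
representation `α = Σ a_i α_i` with `a₁ ≥ 0` and
`0 ≤ a_i < gcd(α₁,…,α_{i-1}) / gcd(α₁,…,α_i)` for `2 ≤ i ≤ r`. -/
theorem telescopic_unique_representation (r : ℕ) (hr : 1 ≤ r) (α : ℕ → ℕ)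
    (h : IsTelescopic r α) :
    ∀ x ∈ AddSubmonoid.closure {y : ℕ | ∃ i, 1 ≤ i ∧ i ≤ r ∧ y = α i},
      ∃! a : ℕ → ℕ,
        (∀ i, (i = 0 ∨ r < i) → a i = 0) ∧
        (∀ i, 2 ≤ i → i ≤ r → a i < dtel α (i - 1) / dtel α i) ∧
        x = ∑ i ∈ Finset.Icc 1 r, a i * α i := by
  intro x hx
  obtain ⟨b, rfl⟩ := exists_repr r α hx
  obtain ⟨a, h1, h2, h3⟩ := norm_lemma r hr α h b
  refine ⟨a, ⟨h1, h2, h3.symm⟩, ?_⟩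
  rintro a' ⟨g1, g2, g3⟩
  funext i
  rcases Nat.lt_or_ge r i with hir | hir
  · rw [g1 i (Or.inr hir), h1 i (Or.inr hir)]
  · rcases Nat.eq_zero_or_pos i with rfl | hi1
    · rw [g1 0 (Or.inl rfl), h1 0 (Or.inl rfl)]
    · exact uniq_lemma r hr α h r hr le_rfl a' a g2 h2
        ((h3.trans g3).symm) i hi1 hir
end

section
/- Let Δ = {δ₀, ..., δ_g} ⊆ (ℕ_{≥0})² be a δ-sequence of type C and S_Δ the semigroup it generates. Let k be a field and k[S_Δ] the semigroup algebra. Let ψ : k[V₀,...,V_g] → k[S_Δ] be the k-algebra epimorphism with ψ(V_i) = U^{δ_i}. Then the kernel of ψ is the ideal generated by the binomials V_i^{n_i} − Π_{j=0}^{i-1} V_j^{a_{ij}} for 0 < i < g, where n_i δ_i = Σ_{j=0}^{i-1} a_{ij} δ_j is the unique expression with a_{i0} > 0 and 0 ≤ a_{ij} < n_j for 1 ≤ j ≤ i−1. -/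
open MvPolynomial

lemma aux_prod_X_pow {σ R : Type*} [CommSemiring R] (s : Finset σ) (e : σ → ℕ) :
    (∏ j ∈ s, (X j ^ e j : MvPolynomial σ R)) =
      monomial (∑ j ∈ s, Finsupp.single j (e j)) 1 := by
  induction s using Finset.cons_induction with
  | empty => simp
  | cons i s hi ih =>
      rw [Finset.prod_cons, Finset.sum_cons, ih, X_pow_eq_monomial, monomial_mul, one_mul]

lemma aux_aeval_prod {ι k : Type*} [Field k] (δ : ι → ℕ × ℕ)
    (s : Finset ι) (e : ι → ℕ) :
    (MvPolynomial.aeval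
        (fun i => (AddMonoidAlgebra.single (δ i) 1 : AddMonoidAlgebra k (ℕ × ℕ))) :
        MvPolynomial ι k →ₐ[k] AddMonoidAlgebra k (ℕ × ℕ))
        (∏ j ∈ s, X j ^ e j) =
      AddMonoidAlgebra.single (∑ j ∈ s, e j • δ j) 1 := by
  rw [map_prod]
  simp only [map_pow, aeval_X, AddMonoidAlgebra.single_pow, one_pow]
  rw [AddMonoidAlgebra.prod_single, Finset.prod_const_one]

lemma aux_aeval_monomial {ι k : Type*} [Fintype ι] [Field k] (δ : ι → ℕ × ℕ)
    (c : ι →₀ ℕ) (r : k) :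
    (MvPolynomial.aeval
        (fun i => (AddMonoidAlgebra.single (δ i) 1 : AddMonoidAlgebra k (ℕ × ℕ))) :
        MvPolynomial ι k →ₐ[k] AddMonoidAlgebra k (ℕ × ℕ))
        (monomial c r) =
      AddMonoidAlgebra.single (∑ j, c j • δ j) r := by
  have h1 : (monomial c r : MvPolynomial ι k) = C r * ∏ j, X j ^ c j := by
    rw [aux_prod_X_pow, Finsupp.univ_sum_single, C_mul_monomial, mul_one]
  rw [h1, map_mul, aux_aeval_prod, aeval_C, AddMonoidAlgebra.coe_algebraMap]
  simp only [Function.comp_apply, Algebra.algebraMap_self, RingHom.id_apply]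
  rw [AddMonoidAlgebra.single_mul_single, zero_add, mul_one]

/-- for a type C δ-sequence `Δ = {δ₀, …, δ_g} ⊆ ℕ²` (the first `g` elements
lie on a line through the origin, `δ_g` does not, and elements of `S_Δ` have unique
constrained expressions), the kernel of the `k`-algebra epimorphism
`ψ : k[V₀,…,V_g] → k[S_Δ]`, `ψ(V_i) = U^{δ_i}`, is generated by the binomials
`V_i^{n_i} - Π_{j<i} V_j^{a_{ij}}` for `0 < i < g`, where
`n_i δ_i = Σ_{j<i} a_{ij} δ_j` is the unique expression with `a_{i0} > 0` and
`0 ≤ a_{ij} < n_j` for `1 ≤ j ≤ i-1`. -/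
theorem typeC_semigroup_algebra_kernel (g : ℕ) (hg : 2 ≤ g)
    (k : Type*) [Field k]
    (δ : Fin (g + 1) → ℕ × ℕ) (hδ : ∀ i, δ i ≠ 0)
    (hline : ∃ u v : ℤ, (u, v) ≠ (0, 0) ∧
      (∀ i : Fin (g + 1), (i : ℕ) < g →
        u * ((δ i).1 : ℤ) + v * ((δ i).2 : ℤ) = 0) ∧
      (∀ i : Fin (g + 1), (i : ℕ) = g →
        u * ((δ i).1 : ℤ) + v * ((δ i).2 : ℤ) ≠ 0))
    (n : Fin (g + 1) → ℕ) (a : Fin (g + 1) → Fin (g + 1) → ℕ)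
    (hn : ∀ i : Fin (g + 1), 0 < (i : ℕ) → (i : ℕ) < g → 1 < n i)
    (hexpr : ∀ i : Fin (g + 1), 0 < (i : ℕ) → (i : ℕ) < g →
      n i • δ i = ∑ j ∈ Finset.univ.filter (fun j => j < i), a i j • δ j ∧
      0 < a i 0 ∧
      (∀ j : Fin (g + 1), 0 < (j : ℕ) → j < i → a i j < n j))
    (huniq : ∀ c c' : Fin (g + 1) → ℕ,
      (∀ j : Fin (g + 1), 0 < (j : ℕ) → (j : ℕ) < g → c j < n j) →
      (∀ j : Fin (g + 1), 0 < (j : ℕ) → (j : ℕ) < g → c' j < n j) →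
      ∑ j, c j • δ j = ∑ j, c' j • δ j → c = c') :
    RingHom.ker (MvPolynomial.aeval
        (fun i : Fin (g + 1) =>
          (AddMonoidAlgebra.single (δ i) 1 : AddMonoidAlgebra k (ℕ × ℕ))) :
        MvPolynomial (Fin (g + 1)) k →ₐ[k] AddMonoidAlgebra k (ℕ × ℕ)) =
      Ideal.span {P : MvPolynomial (Fin (g + 1)) k |
        ∃ i : Fin (g + 1), 0 < (i : ℕ) ∧ (i : ℕ) < g ∧
          P = X i ^ n i -
            ∏ j ∈ Finset.univ.filter (fun j => j < i), X j ^ a i j} := by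
  classical
  set I : Ideal (MvPolynomial (Fin (g + 1)) k) :=
    Ideal.span {P : MvPolynomial (Fin (g + 1)) k |
      ∃ i : Fin (g + 1), 0 < (i : ℕ) ∧ (i : ℕ) < g ∧
        P = X i ^ n i -
          ∏ j ∈ Finset.univ.filter (fun j => j < i), X j ^ a i j} with hIdef
  -- The easy inclusion: I ≤ ker ψ
  have hIle : I ≤ RingHom.ker (MvPolynomial.aeval
      (fun i : Fin (g + 1) =>
        (AddMonoidAlgebra.single (δ i) 1 : AddMonoidAlgebra k (ℕ × ℕ))) :
      MvPolynomial (Fin (g + 1)) k →ₐ[k] AddMonoidAlgebra k (ℕ × ℕ)) := by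
    rw [hIdef, Ideal.span_le]
    rintro P ⟨i, hi0, hig, rfl⟩
    simp only [SetLike.mem_coe, RingHom.mem_ker]
    rw [map_sub, aux_aeval_prod, map_pow, aeval_X, AddMonoidAlgebra.single_pow, one_pow,
      (hexpr i hi0 hig).1, sub_self]
  -- Weights for the termination measure
  set A : ℕ :=
    ∑ p ∈ (Finset.univ ×ˢ Finset.univ : Finset (Fin (g + 1) × Fin (g + 1))), a p.1 p.2 with hA
  set B : ℕ := (g + 1) * A + 1 with hB
  have hB1 : 1 ≤ B := by omega
  have hAB : ∀ i j : Fin (g + 1), a i j ≤ A := by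
    intro i j
    have h := Finset.single_le_sum (f := fun p : Fin (g + 1) × Fin (g + 1) => a p.1 p.2)
      (fun p _ => Nat.zero_le _)
      (show (i, j) ∈ (Finset.univ ×ˢ Finset.univ : Finset (Fin (g + 1) × Fin (g + 1))) from
        Finset.mem_product.2 ⟨Finset.mem_univ _, Finset.mem_univ _⟩)
    exact h
  set μ : (Fin (g + 1) →₀ ℕ) → ℕ := fun c => ∑ j, c j * B ^ (j : ℕ) with hμdef
  have hμadd : ∀ x y : Fin (g + 1) →₀ ℕ, μ (x + y) = μ x + μ y := by
    intro x y
    simp [hμdef, Finsupp.add_apply, add_mul, Finset.sum_add_distrib]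
  have hμsingle : ∀ (j : Fin (g + 1)) (m : ℕ), μ (Finsupp.single j m) = m * B ^ (j : ℕ) := by
    intro j m
    simp only [hμdef]
    rw [Finset.sum_eq_single j]
    · rw [Finsupp.single_eq_same]
    · intro x _ hx
      rw [Finsupp.single_eq_of_ne' (Ne.symm hx), zero_mul]
    · intro h; exact absurd (Finset.mem_univ j) h
  have hμsum : ∀ (s : Finset (Fin (g + 1))) (f : Fin (g + 1) → Fin (g + 1) →₀ ℕ),
      μ (∑ j ∈ s, f j) = ∑ j ∈ s, μ (f j) := by
    intro s f
    induction s using Finset.cons_induction with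
    | empty => simp [hμdef]
    | cons i s hi ih => rw [Finset.sum_cons, Finset.sum_cons, hμadd, ih]
  -- the key inequality
  have hkey : ∀ i : Fin (g + 1), 0 < (i : ℕ) → (i : ℕ) < g →
      ∑ j ∈ Finset.univ.filter (fun j => j < i), a i j * B ^ (j : ℕ) <
        n i * B ^ (i : ℕ) := by
    intro i hi0 hig
    have hni : 1 ≤ n i := le_of_lt (hn i hi0 hig)
    have hcard : (Finset.univ.filter (fun j => j < i)).card ≤ g + 1 := by
      calc (Finset.univ.filter (fun j => j < i)).card
          ≤ (Finset.univ : Finset (Fin (g + 1))).card := Finset.card_filter_le _ _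
        _ = g + 1 := by simp
    calc ∑ j ∈ Finset.univ.filter (fun j => j < i), a i j * B ^ (j : ℕ)
        ≤ ∑ _j ∈ Finset.univ.filter (fun j => j < i), A * B ^ ((i : ℕ) - 1) := by
          refine Finset.sum_le_sum fun j hj => ?_
          have hji : (j : ℕ) < (i : ℕ) := (Finset.mem_filter.1 hj).2
          exact Nat.mul_le_mul (hAB i j) (Nat.pow_le_pow_right hB1 (by omega))
      _ = (Finset.univ.filter (fun j => j < i)).card * (A * B ^ ((i : ℕ) - 1)) := by
          rw [Finset.sum_const, smul_eq_mul]
      _ ≤ (g + 1) * (A * B ^ ((i : ℕ) - 1)) :=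
          Nat.mul_le_mul_right _ hcard
      _ = ((g + 1) * A) * B ^ ((i : ℕ) - 1) := by ring
      _ < B * B ^ ((i : ℕ) - 1) := by
          have hpos : 0 < B ^ ((i : ℕ) - 1) := Nat.pow_pos (by omega)
          exact Nat.mul_lt_mul_of_lt_of_le (by omega) le_rfl hpos
      _ = B ^ (i : ℕ) := by
          rw [← pow_succ']
          congr 1
          omega
      _ ≤ n i * B ^ (i : ℕ) := Nat.le_mul_of_pos_left _ (by omega)
  -- reduction lemma
  have red : ∀ N : ℕ, ∀ c : Fin (g + 1) →₀ ℕ, μ c ≤ N →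
      ∃ c' : Fin (g + 1) →₀ ℕ,
        (∀ j : Fin (g + 1), 0 < (j : ℕ) → (j : ℕ) < g → c' j < n j) ∧
        (monomial c 1 - monomial c' 1 : MvPolynomial (Fin (g + 1)) k) ∈ I := by
    intro N
    induction N using Nat.strong_induction_on with
    | _ N ih =>
      intro c hc
      by_cases hnorm : ∀ j : Fin (g + 1), 0 < (j : ℕ) → (j : ℕ) < g → c j < n j
      · exact ⟨c, hnorm, by rw [sub_self]; exact I.zero_mem⟩
      · push_neg at hnorm
        obtain ⟨i, hi0, hig, hci⟩ := hnorm
        set d : Fin (g + 1) →₀ ℕ := c - Finsupp.single i (n i) with hd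
        have hcd : d + Finsupp.single i (n i) = c := by
          ext x
          rw [Finsupp.add_apply, hd, Finsupp.tsub_apply]
          rcases eq_or_ne i x with rfl | hix
          · rw [Finsupp.single_eq_same]; omega
          · rw [Finsupp.single_eq_of_ne' hix]
            omega
        set c₁ : Fin (g + 1) →₀ ℕ :=
          d + ∑ j ∈ Finset.univ.filter (fun j => j < i), Finsupp.single j (a i j) with hc₁
        have hkeyeq : (monomial c 1 - monomial c₁ 1 : MvPolynomial (Fin (g + 1)) k) =
            monomial d 1 *
              (X i ^ n i - ∏ j ∈ Finset.univ.filter (fun j => j < i), X j ^ a i j) := by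
          rw [mul_sub, X_pow_eq_monomial, monomial_mul, mul_one, aux_prod_X_pow,
            monomial_mul, mul_one, hcd, hc₁]
        have hmem : (monomial c 1 - monomial c₁ 1 : MvPolynomial (Fin (g + 1)) k) ∈ I := by
          rw [hkeyeq]
          exact Ideal.mul_mem_left _ _ (Ideal.subset_span ⟨i, hi0, hig, rfl⟩)
        have hμlt : μ c₁ < μ c := by
          have h1 : μ c = μ d + n i * B ^ (i : ℕ) := by
            rw [← hcd, hμadd, hμsingle]
          have h2 : μ c₁ =
              μ d + ∑ j ∈ Finset.univ.filter (fun j => j < i), a i j * B ^ (j : ℕ) := by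
            rw [hc₁, hμadd, hμsum]
            congr 1
            exact Finset.sum_congr rfl fun j _ => hμsingle j (a i j)
          rw [h1, h2]
          exact Nat.add_lt_add_left (hkey i hi0 hig) _
        obtain ⟨c', h1, h2⟩ := ih (μ c₁) (lt_of_lt_of_le hμlt hc) c₁ le_rfl
        refine ⟨c', h1, ?_⟩
        have hsum := I.add_mem hmem h2
        rwa [sub_add_sub_cancel] at hsum
  -- main argument
  refine le_antisymm ?_ hIle
  intro P hP
  have hPk : (MvPolynomial.aeval
      (fun i : Fin (g + 1) =>
        (AddMonoidAlgebra.single (δ i) 1 : AddMonoidAlgebra k (ℕ × ℕ))) :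
      MvPolynomial (Fin (g + 1)) k →ₐ[k] AddMonoidAlgebra k (ℕ × ℕ)) P = 0 :=
    (RingHom.mem_ker).1 hP
  have hred : ∀ c : Fin (g + 1) →₀ ℕ, ∃ c' : Fin (g + 1) →₀ ℕ,
      (∀ j : Fin (g + 1), 0 < (j : ℕ) → (j : ℕ) < g → c' j < n j) ∧
      (monomial c 1 - monomial c' 1 : MvPolynomial (Fin (g + 1)) k) ∈ I :=
    fun c => red (μ c) c le_rfl
  choose rd hrd1 hrd2 using hred
  set Q : MvPolynomial (Fin (g + 1)) k :=
    ∑ c ∈ P.support, monomial (rd c) (coeff c P) with hQ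
  have hPQ : P - Q ∈ I := by
    have hPQeq : P - Q =
        ∑ c ∈ P.support, (monomial c (coeff c P) - monomial (rd c) (coeff c P)) := by
      rw [Finset.sum_sub_distrib, support_sum_monomial_coeff, ← hQ]
    rw [hPQeq]
    refine Ideal.sum_mem _ fun c _ => ?_
    have heq : (monomial c (coeff c P) - monomial (rd c) (coeff c P) :
        MvPolynomial (Fin (g + 1)) k) =
        C (coeff c P) * (monomial c 1 - monomial (rd c) 1) := by
      rw [mul_sub, C_mul_monomial, C_mul_monomial, mul_one]
    rw [heq]
    exact Ideal.mul_mem_left _ _ (hrd2 c)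
  suffices hQ0 : Q = 0 by
    rw [hQ0, sub_zero] at hPQ
    exact hPQ
  have hψQ : (MvPolynomial.aeval
      (fun i : Fin (g + 1) =>
        (AddMonoidAlgebra.single (δ i) 1 : AddMonoidAlgebra k (ℕ × ℕ))) :
      MvPolynomial (Fin (g + 1)) k →ₐ[k] AddMonoidAlgebra k (ℕ × ℕ)) Q = 0 := by
    have h1 := (RingHom.mem_ker).1 (hIle hPQ)
    rw [map_sub, hPk, zero_sub, neg_eq_zero] at h1
    exact h1
  by_contra hQne
  obtain ⟨dm, hdm⟩ := MvPolynomial.support_nonempty.2 hQne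
  have hQsupp : ∀ e ∈ Q.support, ∀ j : Fin (g + 1), 0 < (j : ℕ) → (j : ℕ) < g → e j < n j := by
    intro e he
    have hsub := MvPolynomial.support_sum (s := P.support)
      (f := fun c => monomial (rd c) (coeff c P)) (hQ ▸ he)
    obtain ⟨c, _, he'⟩ := Finset.mem_biUnion.1 hsub
    rw [support_monomial] at he'
    split_ifs at he' with h
    · exact absurd he' (Finset.notMem_empty e)
    · rw [Finset.mem_singleton] at he'
      exact he' ▸ hrd1 c
  have hm : ∀ e ∈ Q.support, e ≠ dm → (∑ j, e j • δ j) ≠ (∑ j, dm j • δ j) := by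
    intro e he hne heq
    exact hne (Finsupp.ext fun x =>
      congrFun (huniq (fun j => e j) (fun j => dm j) (hQsupp e he) (hQsupp dm hdm) heq) x)
  have hψQ' : (MvPolynomial.aeval
      (fun i : Fin (g + 1) =>
        (AddMonoidAlgebra.single (δ i) 1 : AddMonoidAlgebra k (ℕ × ℕ))) :
      MvPolynomial (Fin (g + 1)) k →ₐ[k] AddMonoidAlgebra k (ℕ × ℕ)) Q =
      ∑ e ∈ Q.support, AddMonoidAlgebra.single (∑ j, e j • δ j) (coeff e Q) := by
    conv_lhs => rw [← support_sum_monomial_coeff Q]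
    rw [map_sum]
    exact Finset.sum_congr rfl fun e _ => aux_aeval_monomial δ e _
  have h0 : coeff dm Q = 0 := by
    have happ := congrArg (fun f : AddMonoidAlgebra k (ℕ × ℕ) => f.coeff (∑ j, dm j • δ j))
      (hψQ'.symm.trans hψQ)
    simp only [AddMonoidAlgebra.coeff_zero, AddMonoidAlgebra.coeff_sum, AddMonoidAlgebra.coeff_single, Finsupp.coe_zero, Pi.zero_apply] at happ
    rw [Finsupp.finset_sum_apply] at happ
    rw [Finset.sum_eq_single_of_mem dm hdm
      (fun e he hne => Finsupp.single_eq_of_ne' (hm e he hne))] at happ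
    rwa [Finsupp.single_eq_same] at happ
  exact MvPolynomial.mem_support_iff.1 hdm h0
end
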